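/- arXiv:1111.6278 — 2 statements merged into one kernel-verified Lean document; each statement's English description precedes it below -/
import Mathlib

section
/- Let G = C_{2k} be the even cycle (k ≥ 2, s = 2k). Then the vanishing ideal I(X) is generated, as an ideal of S, by the set {t_i^{q−1} − t_j^{q−1} : 1 ≤ i, j ≤ s} together with the set of all binomials f_σ^r, where r ranges over {1,…,q−2} and σ = A ⊔ B ranges over all partitions of {1,…,s} with |A| = |B| and 1 ∈ A. -/
open MvPolynomial

noncomputable section

/-- The vanishing ideal `I(X) ⊆ K[t_1,…,t_{2k}]` of the algebraic toric set
`X* = {(x_1x_2, x_2x_3, …, x_{2k}x_1) : x ∈ (Kˣ)^{2k}}` parameterized by the edges of the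
even cycle `C_{2k}`. -/
def cycleVanishingIdeal (K : Type) [Field K] (k : ℕ) :
    Ideal (MvPolynomial (Fin (2 * k)) K) :=
  Ideal.span {f | (∃ d, f.IsHomogeneous d) ∧
    ∀ x : Fin (2 * k) → Kˣ,
      eval (fun i => ((x i * x (finRotate (2 * k) i) : Kˣ) : K)) f = 0}

/-- The recursive labelling function `ρ_σ^r` (with indices `0,…,s−1`, so that the paper's
index `i ∈ {1,…,s}` corresponds to `i−1` here).  The partition `σ = A ⊔ B` of
`{0,…,s−1}` is recorded by the finset `A`, `B` being its complement;
`ρ(0) = r` and `ρ(i+1) = q−1−ρ(i)` if `i` and `i+1` lie in the same part of `σ`,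
`ρ(i+1) = ρ(i)` otherwise. -/
def rho (q : ℕ) (A : Finset ℕ) (r : ℕ) : ℕ → ℕ
  | 0 => r
  | i + 1 => if (i ∈ A ↔ i + 1 ∈ A) then q - 1 - rho q A r i else rho q A r i

/-- The binomial `f_σ^r = t^a − t^b` associated to a partition `σ = A ⊔ B` of
`{0,…,2k−1}` (with `0 ∈ A`) and `r ∈ {1,…,q−2}`: `supp(a) = A`, `supp(b) = B`, and the
exponent of `t_i` is `ρ_σ^r(i)`. -/
def fsr (K : Type) [Field K] (q k : ℕ) (A : Finset ℕ) (r : ℕ) :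
    MvPolynomial (Fin (2 * k)) K :=
  monomial (Finsupp.equivFunOnFinite.symm fun i : Fin (2 * k) =>
      if (i : ℕ) ∈ A then rho q A r i else 0) 1 -
  monomial (Finsupp.equivFunOnFinite.symm fun i : Fin (2 * k) =>
      if (i : ℕ) ∈ A then 0 else rho q A r i) 1

open Finset
set_option linter.unusedSectionVars false
set_option linter.unusedVariables false
set_option maxHeartbeats 1000000
namespace CycleAux

variable {K : Type} [Field K] [Fintype K] {k q : ℕ}

/-- torus value of a monomial exponent vector -/
def Ee (K : Type) [Field K] (k : ℕ) (a : Fin (2*k) → ℕ) (x : Fin (2*k) → Kˣ) : Kˣ :=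
  ∏ i, (x i * x (finRotate (2*k) i)) ^ (a i)

/-- vertex exponent -/
def Cv (k : ℕ) (a : Fin (2*k) → ℕ) (j : Fin (2*k)) : ℕ :=
  a ((finRotate (2*k)).symm j) + a j

lemma Ee_add (a b : Fin (2*k) → ℕ) (x : Fin (2*k) → Kˣ) :
    Ee K k (a + b) x = Ee K k a x * Ee K k b x := by
  simp only [Ee, Pi.add_apply, pow_add, Finset.prod_mul_distrib]

lemma Ee_vertex (a : Fin (2*k) → ℕ) (x : Fin (2*k) → Kˣ) :
    Ee K k a x = ∏ j, x j ^ (Cv k a j) := by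
  calc Ee K k a x = (∏ i, x i ^ a i) * ∏ i, x (finRotate (2*k) i) ^ a i := by
        simp [Ee, mul_pow, Finset.prod_mul_distrib]
    _ = (∏ i, x i ^ a i) * ∏ j, x j ^ a ((finRotate (2*k)).symm j) := by
        congr 1
        rw [← Equiv.prod_comp (finRotate (2*k))
          (fun j => x j ^ a ((finRotate (2*k)).symm j))]
        simp only [Equiv.symm_apply_apply]
    _ = ∏ j, x j ^ Cv k a j := by
        rw [← Finset.prod_mul_distrib]
        exact Finset.prod_congr rfl fun j _ => by rw [Cv, pow_add, mul_comm]

lemma unit_pow_congr (hcard : Fintype.card K = q) (u : Kˣ) {m n : ℕ}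
    (h : m ≡ n [MOD q - 1]) : u ^ m = u ^ n := by
  classical
  have hd : orderOf u ∣ q - 1 := by
    have := orderOf_dvd_card (x := u)
    rwa [Fintype.card_units, hcard] at this
  exact pow_eq_pow_iff_modEq.2 (h.of_dvd hd)

lemma exists_gen (hcard : Fintype.card K = q) : ∃ g : Kˣ, orderOf g = q - 1 := by
  classical
  obtain ⟨g, hg⟩ := IsCyclic.exists_generator (α := Kˣ)
  refine ⟨g, ?_⟩
  rw [orderOf_eq_card_of_forall_mem_zpowers hg, Nat.card_eq_fintype_card,
    Fintype.card_units, hcard]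

lemma congr_to_eq (hcard : Fintype.card K = q) (a b : Fin (2*k) → ℕ)
    (h : ∀ j, Cv k a j ≡ Cv k b j [MOD q - 1]) (x : Fin (2*k) → Kˣ) :
    Ee K k a x = Ee K k b x := by
  rw [Ee_vertex, Ee_vertex]
  exact Finset.prod_congr rfl fun j _ => unit_pow_congr hcard (x j) (h j)

lemma eq_to_congr (hcard : Fintype.card K = q) (a b : Fin (2*k) → ℕ)
    (h : ∀ x, Ee K k a x = Ee K k b x) (j : Fin (2*k)) :
    Cv k a j ≡ Cv k b j [MOD q - 1] := by
  classical
  obtain ⟨g, hg⟩ := exists_gen (K := K) hcard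
  have hx := h (fun l => if l = j then g else 1)
  rw [Ee_vertex, Ee_vertex] at hx
  have hpow : ∀ c : Fin (2*k) → ℕ,
      (∏ l, (if l = j then g else 1) ^ (Cv k c l)) = g ^ Cv k c j := by
    intro c
    rw [Finset.prod_eq_single j]
    · simp
    · intro l _ hl; simp [hl]
    · simp
  rw [hpow, hpow] at hx
  rw [← hg]
  exact pow_eq_pow_iff_modEq.1 hx




variable {q r : ℕ} {A : Finset ℕ}

lemma rho_bounds (hq : 2 < q) (hr1 : 1 ≤ r) (hr2 : r ≤ q - 2) :
    ∀ i, 1 ≤ rho q A r i ∧ rho q A r i ≤ q - 2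
  | 0 => ⟨hr1, hr2⟩
  | i + 1 => by
    have ih := rho_bounds hq hr1 hr2 i
    unfold rho
    split_ifs <;> omega

lemma rot_val {n : ℕ} (i : Fin n) (h : (i:ℕ)+1 < n) : ((finRotate n) i : ℕ) = (i:ℕ)+1 := by
  rcases n with _|n
  · omega
  rw [finRotate_succ_apply]
  exact Fin.val_add_one_of_lt (by simp only [Fin.lt_iff_val_lt_val, Fin.val_last]; omega)

lemma rot_last {n : ℕ} (i : Fin n) (h : (i:ℕ)+1 = n) : ((finRotate n) i : ℕ) = 0 := by
  rcases n with _|n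
  · omega
  have : i = Fin.last n := by
    apply Fin.ext; simp only [Fin.val_last]; omega
  subst this
  rw [finRotate_succ_apply, Fin.last_add_one]
  rfl

lemma rho_cast (hq : 2 < q) (hr1 : 1 ≤ r) (hr2 : r ≤ q - 2) (h0 : 0 ∈ A) :
    ∀ i, ((rho q A r i : ZMod (q-1)) =
      if (i ∈ A ↔ Even i) then (r : ZMod (q-1)) else -(r : ZMod (q-1)))
  | 0 => by simp [rho, h0]
  | i + 1 => by
    have ih := rho_cast hq hr1 hr2 h0 i
    have hb := rho_bounds (A := A) hq hr1 hr2 i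
    unfold rho
    by_cases hiff : (i ∈ A ↔ i + 1 ∈ A)
    · have hcond : ¬((i + 1 ∈ A ↔ Even (i+1)) ↔ (i ∈ A ↔ Even i)) := by
        simp only [Nat.even_add_one]; tauto
      have hcast : (((q - 1 - rho q A r i : ℕ)) : ZMod (q-1)) = -(rho q A r i : ZMod (q-1)) := by
        rw [Nat.cast_sub (by omega)]
        simp
      rw [if_pos hiff, hcast, ih]
      by_cases hd : (i ∈ A ↔ Even i)
      · rw [if_pos hd, if_neg (by tauto)]
      · rw [if_neg hd, if_pos (by tauto), neg_neg]
    · have hcond : ((i + 1 ∈ A ↔ Even (i+1)) ↔ (i ∈ A ↔ Even i)) := by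
        simp only [Nat.even_add_one]; tauto
      rw [if_neg hiff, ih]
      by_cases hd : (i ∈ A ↔ Even i)
      · rw [if_pos hd, if_pos (hcond.2 hd)]
      · rw [if_neg hd, if_neg (fun h => hd (hcond.1 h))]

lemma rho_val (hq : 2 < q) (hr1 : 1 ≤ r) (hr2 : r ≤ q - 2) (h0 : 0 ∈ A) :
    ∀ i, rho q A r i = if (i ∈ A ↔ Even i) then r else q - 1 - r
  | 0 => by simp [rho, h0]
  | i + 1 => by
    have ih := rho_val hq hr1 hr2 h0 i
    unfold rho
    by_cases hiff : (i ∈ A ↔ i + 1 ∈ A)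
    · have hcond : ¬((i + 1 ∈ A ↔ Even (i+1)) ↔ (i ∈ A ↔ Even i)) := by
        simp only [Nat.even_add_one]; tauto
      rw [if_pos hiff, ih]
      by_cases hd : (i ∈ A ↔ Even i)
      · rw [if_pos hd, if_neg (by tauto)]
      · rw [if_neg hd, if_pos (by tauto)]
        omega
    · have hcond : ((i + 1 ∈ A ↔ Even (i+1)) ↔ (i ∈ A ↔ Even i)) := by
        simp only [Nat.even_add_one]; tauto
      rw [if_neg hiff, ih]
      by_cases hd : (i ∈ A ↔ Even i)
      · rw [if_pos hd, if_pos (hcond.2 hd)]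
      · rw [if_neg hd, if_neg (fun h => hd (hcond.1 h))]

lemma neg_one_sum : ∀ k : ℕ, ∑ m ∈ range (2*k), (-1:ℤ)^m = 0
  | 0 => by simp
  | k + 1 => by
    have ih := neg_one_sum k
    have h2 : 2*(k+1) = (2*k + 1) + 1 := by ring
    have h1 : (-1:ℤ)^(2*k) = 1 := Even.neg_one_pow ⟨k, by ring⟩
    rw [h2, Finset.sum_range_succ, Finset.sum_range_succ, ih, pow_succ, h1]
    ring

lemma sum_rho (hq : 2 < q) (hr1 : 1 ≤ r) (hr2 : r ≤ q - 2) (h0 : 0 ∈ A) (k : ℕ) :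
    2 * (∑ m ∈ range (2*k), if m ∈ A then (rho q A r m : ℤ) else 0)
      - 2 * (∑ m ∈ range (2*k), if m ∈ A then 0 else (rho q A r m : ℤ))
    = ((q:ℤ) - 1) * ((((range (2*k)).filter (fun m => m ∈ A)).card : ℤ)
        - (((range (2*k)).filter (fun m => m ∉ A)).card : ℤ)) := by
  classical
  have key : ∀ m : ℕ,
      2 * (if m ∈ A then (rho q A r m : ℤ) else 0)
        - 2 * (if m ∈ A then 0 else (rho q A r m : ℤ))
      = (if m ∈ A then ((q:ℤ)-1) else -((q:ℤ)-1)) + (-1:ℤ)^m * (2*(r:ℤ) - ((q:ℤ)-1)) := by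
    intro m
    have hv := rho_val (A := A) hq hr1 hr2 h0 m
    have hcast : ((q - 1 - r : ℕ) : ℤ) = (q:ℤ) - 1 - r := by
      have : (1:ℕ) ≤ q := by omega
      push_cast [Nat.cast_sub (show r ≤ q - 1 by omega), Nat.cast_sub this]
      ring
    by_cases hm : m ∈ A <;> by_cases he : Even m
    · rw [if_pos hm, if_pos hm, if_pos hm, hv, if_pos (by tauto), he.neg_one_pow]; ring
    · rw [if_pos hm, if_pos hm, if_pos hm, hv, if_neg (by tauto),
        (Nat.not_even_iff_odd.1 he).neg_one_pow, hcast]; ring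
    · rw [if_neg hm, if_neg hm, if_neg hm, hv, if_neg (by tauto),
        he.neg_one_pow, hcast]; ring
    · rw [if_neg hm, if_neg hm, if_neg hm, hv, if_pos (by tauto),
        (Nat.not_even_iff_odd.1 he).neg_one_pow]; ring
  calc 2 * (∑ m ∈ range (2*k), if m ∈ A then (rho q A r m : ℤ) else 0)
      - 2 * (∑ m ∈ range (2*k), if m ∈ A then 0 else (rho q A r m : ℤ))
      = ∑ m ∈ range (2*k), (2 * (if m ∈ A then (rho q A r m : ℤ) else 0)
          - 2 * (if m ∈ A then 0 else (rho q A r m : ℤ))) := by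
        rw [Finset.sum_sub_distrib, Finset.mul_sum, Finset.mul_sum]
    _ = ∑ m ∈ range (2*k), ((if m ∈ A then ((q:ℤ)-1) else -((q:ℤ)-1))
          + (-1:ℤ)^m * (2*(r:ℤ) - ((q:ℤ)-1))) := Finset.sum_congr rfl fun m _ => key m
    _ = (∑ m ∈ range (2*k), (if m ∈ A then ((q:ℤ)-1) else -((q:ℤ)-1)))
          + (∑ m ∈ range (2*k), (-1:ℤ)^m) * (2*(r:ℤ) - ((q:ℤ)-1)) := by
        rw [Finset.sum_add_distrib, Finset.sum_mul]
    _ = ((q:ℤ) - 1) * ((((range (2*k)).filter (fun m => m ∈ A)).card : ℤ)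
        - (((range (2*k)).filter (fun m => m ∉ A)).card : ℤ)) := by
        rw [neg_one_sum, Finset.sum_ite, Finset.sum_const, Finset.sum_const]
        simp only [nsmul_eq_mul, zero_mul, add_zero]
        ring



section Main
variable {K : Type} [Field K] [Fintype K] {q r k : ℕ} {A : Finset ℕ}

def coords (K : Type) [Field K] (k : ℕ) (x : Fin (2*k) → Kˣ) : Fin (2*k) → K :=
  fun i => ((x i * x (finRotate (2*k) i) : Kˣ) : K)

lemma fdeg {n : ℕ} (m : Fin n →₀ ℕ) : m.degree = ∑ i, m i := by
  rw [Finsupp.degree]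
  exact Finset.sum_subset (Finset.subset_univ _) (fun i _ h => Finsupp.notMem_support_iff.1 h)

lemma eval_monomial_unit (m : Fin (2*k) →₀ ℕ) (x : Fin (2*k) → Kˣ) :
    eval (coords K k x) (monomial m (1:K)) = ((Ee K k ⇑m x : Kˣ) : K) := by
  rw [eval_monomial, one_mul, Finsupp.prod_fintype _ _ (fun i => pow_zero _)]
  unfold Ee
  have hcoe : ((∏ i, (x i * x (finRotate (2*k) i)) ^ (m i) : Kˣ) : K)
      = ∏ i, (((x i * x (finRotate (2*k) i)) ^ (m i) : Kˣ) : K) := by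
    first
    | exact Units.val_prod ..
    | exact map_prod (Units.coeHom K) _ _
  rw [hcoe]
  exact Finset.prod_congr rfl fun i _ => by rw [coords]; push_cast; rfl

lemma unit_pow_qsub1 (hcard : Fintype.card K = q) (u : Kˣ) : u ^ (q-1) = 1 := by
  classical
  rw [← hcard, ← Fintype.card_units]; exact pow_card_eq_one

lemma bin_vanish (a b : Fin (2*k) →₀ ℕ) (hE : ∀ x, Ee K k ⇑a x = Ee K k ⇑b x)
    (x : Fin (2*k) → Kˣ) :
    eval (coords K k x) (monomial a (1:K) - monomial b 1) = 0 := by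
  rw [map_sub, eval_monomial_unit, eval_monomial_unit, hE, sub_self]

def aexp (q k : ℕ) (A : Finset ℕ) (r : ℕ) : Fin (2*k) → ℕ :=
  fun i => if (i : ℕ) ∈ A then rho q A r i else 0

def bexp (q k : ℕ) (A : Finset ℕ) (r : ℕ) : Fin (2*k) → ℕ :=
  fun i => if (i : ℕ) ∈ A then 0 else rho q A r i

lemma parity_rot_symm (hk : 0 < k) (j : Fin (2*k)) :
    ((finRotate (2*k)).symm j : ℕ) % 2 ≠ (j : ℕ) % 2 := by
  set i := (finRotate (2*k)).symm j with hi
  have hij : finRotate (2*k) i = j := Equiv.apply_symm_apply _ _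
  have hlt : (i:ℕ) < 2*k := i.isLt
  by_cases h : (i:ℕ)+1 < 2*k
  · have := rot_val i h; rw [hij] at this; omega
  · have h2 : (i:ℕ)+1 = 2*k := by omega
    have := rot_last i h2; rw [hij] at this; omega

lemma diff_cast (hq : 2 < q) (hr1 : 1 ≤ r) (hr2 : r ≤ q - 2) (h0 : 0 ∈ A) (i : Fin (2*k)) :
    ((aexp q k A r i : ZMod (q-1)) - (bexp q k A r i : ZMod (q-1)))
      = (if (i:ℕ) % 2 = 0 then (r : ZMod (q-1)) else -(r : ZMod (q-1))) := by
  have hc := rho_cast (A := A) hq hr1 hr2 h0 (i:ℕ)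
  unfold aexp bexp
  by_cases hm : (i:ℕ) ∈ A <;> by_cases he : Even (i:ℕ)
  · rw [if_pos hm, if_pos hm, hc, if_pos (by tauto), Nat.cast_zero, sub_zero,
      if_pos (Nat.even_iff.1 he)]
  · rw [if_pos hm, if_pos hm, hc, if_neg (by tauto), Nat.cast_zero, sub_zero,
      if_neg (by rw [Nat.even_iff] at he; omega)]
  · rw [if_neg hm, if_neg hm, hc, if_neg (by tauto), Nat.cast_zero, zero_sub, neg_neg,
      if_pos (Nat.even_iff.1 he)]
  · rw [if_neg hm, if_neg hm, hc, if_pos (by tauto), Nat.cast_zero, zero_sub,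
      if_neg (by rw [Nat.even_iff] at he; omega)]

lemma fsr_vertex (hq : 2 < q) (hr1 : 1 ≤ r) (hr2 : r ≤ q - 2) (h0 : 0 ∈ A) (hk : 0 < k)
    (j : Fin (2*k)) :
    Cv k (aexp q k A r) j ≡ Cv k (bexp q k A r) j [MOD q-1] := by
  rw [← ZMod.natCast_eq_natCast_iff]
  unfold Cv
  push_cast
  have hpar := parity_rot_symm hk j
  have d1 := diff_cast hq hr1 hr2 h0 ((finRotate (2*k)).symm j)
  have d2 := diff_cast hq hr1 hr2 h0 j
  have hz : ((aexp q k A r ((finRotate (2*k)).symm j) : ZMod (q-1))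
        - bexp q k A r ((finRotate (2*k)).symm j))
      + ((aexp q k A r j : ZMod (q-1)) - bexp q k A r j) = 0 := by
    rw [d1, d2]
    by_cases hj : (j:ℕ) % 2 = 0
    · rw [if_pos hj, if_neg (by omega)]; ring
    · rw [if_neg hj, if_pos (by omega)]; ring
  linear_combination hz

lemma coe_symm (f : Fin (2*k) → ℕ) : ⇑(Finsupp.equivFunOnFinite.symm f) = f := rfl

lemma fsr_eq_bin :
    fsr K q k A r = monomial (Finsupp.equivFunOnFinite.symm (aexp q k A r)) 1
      - monomial (Finsupp.equivFunOnFinite.symm (bexp q k A r)) 1 := rfl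

lemma fsr_vanish (hq : 2 < q) (hr1 : 1 ≤ r) (hr2 : r ≤ q - 2) (h0 : 0 ∈ A) (hk : 0 < k)
    (hcard : Fintype.card K = q) (x : Fin (2*k) → Kˣ) :
    eval (coords K k x) (fsr K q k A r) = 0 := by
  rw [fsr_eq_bin]
  refine bin_vanish _ _ (fun y => ?_) x
  rw [coe_symm, coe_symm]
  exact congr_to_eq hcard _ _ (fun j => fsr_vertex hq hr1 hr2 h0 hk j) y

lemma fsr_degree_eq (hq : 2 < q) (hr1 : 1 ≤ r) (hr2 : r ≤ q - 2) (h0 : 0 ∈ A)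
    (hA : A ⊆ range (2*k)) (hcards : A.card = (range (2*k) \ A).card) :
    ∑ i : Fin (2*k), aexp q k A r i = ∑ i : Fin (2*k), bexp q k A r i := by
  have hsum := sum_rho (A := A) hq hr1 hr2 h0 k
  have hfA : (range (2*k)).filter (fun m => m ∈ A) = A := by
    ext m
    simp only [mem_filter, mem_range]
    exact ⟨fun h => h.2, fun h => ⟨mem_range.1 (hA h), h⟩⟩
  have hfB : (range (2*k)).filter (fun m => m ∉ A) = range (2*k) \ A := by
    ext m; simp [mem_sdiff]
  rw [hfA, hfB, ← hcards, sub_self, mul_zero] at hsum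
  have hSA : ((∑ i : Fin (2*k), aexp q k A r i : ℕ) : ℤ)
      = ∑ m ∈ range (2*k), (if m ∈ A then (rho q A r m : ℤ) else 0) := by
    push_cast
    rw [← Fin.sum_univ_eq_sum_range (fun m => if m ∈ A then (rho q A r m : ℤ) else 0) (2*k)]
    exact Finset.sum_congr rfl fun i _ => by unfold aexp; split_ifs <;> simp
  have hSB : ((∑ i : Fin (2*k), bexp q k A r i : ℕ) : ℤ)
      = ∑ m ∈ range (2*k), (if m ∈ A then 0 else (rho q A r m : ℤ)) := by
    push_cast
    rw [← Fin.sum_univ_eq_sum_range (fun m => if m ∈ A then 0 else (rho q A r m : ℤ)) (2*k)]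
    exact Finset.sum_congr rfl fun i _ => by unfold bexp; split_ifs <;> simp
  omega

lemma fsr_homog (hq : 2 < q) (hr1 : 1 ≤ r) (hr2 : r ≤ q - 2) (h0 : 0 ∈ A)
    (hA : A ⊆ range (2*k)) (hcards : A.card = (range (2*k) \ A).card) :
    (fsr K q k A r).IsHomogeneous (∑ i : Fin (2*k), aexp q k A r i) := by
  rw [fsr_eq_bin]
  refine (isHomogeneous_monomial _ ?_).sub (isHomogeneous_monomial _ ?_)
  · rw [fdeg]; rfl
  · rw [fdeg]
    exact ((fsr_degree_eq hq hr1 hr2 h0 hA hcards).symm : _)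

lemma gens_sub_lhs (hq : 2 < q) (hk : 0 < k) (hcard : Fintype.card K = q) :
    ({p : MvPolynomial (Fin (2 * k)) K |
          ∃ i j : Fin (2 * k), p = X i ^ (q - 1) - X j ^ (q - 1)} ∪
       {p : MvPolynomial (Fin (2 * k)) K |
          ∃ (A : Finset ℕ) (r : ℕ), A ⊆ Finset.range (2 * k) ∧ 0 ∈ A ∧
            A.card = (Finset.range (2 * k) \ A).card ∧
            1 ≤ r ∧ r ≤ q - 2 ∧ p = fsr K q k A r})
      ⊆ {f : MvPolynomial (Fin (2 * k)) K | (∃ d, f.IsHomogeneous d) ∧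
          ∀ x : Fin (2 * k) → Kˣ,
            eval (fun i => ((x i * x (finRotate (2 * k) i) : Kˣ) : K)) f = 0} := by
  rintro p (⟨i, j, rfl⟩ | ⟨A, r, hA, h0, hcards, hr1, hr2, rfl⟩)
  · constructor
    · exact ⟨q - 1, (isHomogeneous_X_pow i (q-1)).sub (isHomogeneous_X_pow j (q-1))⟩
    · intro x
      have hu : ∀ l : Fin (2*k), ((x l * x (finRotate (2*k) l) : Kˣ) : K) ^ (q-1) = 1 := by
        intro l
        have := unit_pow_qsub1 hcard (x l * x (finRotate (2*k) l))
        calc ((x l * x (finRotate (2*k) l) : Kˣ) : K) ^ (q-1)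
            = (((x l * x (finRotate (2*k) l)) ^ (q-1) : Kˣ) : K) := by push_cast; rfl
          _ = 1 := by rw [this]; rfl
      rw [map_sub, map_pow, map_pow, eval_X, eval_X]
      show coords K k x i ^ (q-1) - coords K k x j ^ (q-1) = 0
      simp only [coords]
      rw [hu i, hu j, sub_self]
  · exact ⟨⟨_, fsr_homog hq hr1 hr2 h0 hA hcards⟩,
      fun x => fsr_vanish hq hr1 hr2 h0 hk hcard x⟩

lemma Ee_mul (a : Fin (2*k) → ℕ) (x y : Fin (2*k) → Kˣ) :
    Ee K k a (x * y) = Ee K k a x * Ee K k a y := by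
  unfold Ee
  rw [← Finset.prod_mul_distrib]
  refine Finset.prod_congr rfl fun i _ => ?_
  rw [Pi.mul_apply, Pi.mul_apply, mul_mul_mul_comm, mul_pow]

lemma Ee_one (a : Fin (2*k) → ℕ) : Ee K k a 1 = 1 := by
  simp [Ee]

/-- the character attached to an exponent vector -/
def chm (K : Type) [Field K] [Fintype K] (k : ℕ) (m : Fin (2*k) →₀ ℕ) : (Fin (2*k) → Kˣ) →* K where
  toFun := fun x => ((Ee K k ⇑m x : Kˣ) : K)
  map_one' := by
    show ((Ee K k ⇑m 1 : Kˣ) : K) = 1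
    rw [Ee_one]; rfl
  map_mul' := fun x y => by
    show ((Ee K k ⇑m (x * y) : Kˣ) : K) = ((Ee K k ⇑m x : Kˣ) : K) * ((Ee K k ⇑m y : Kˣ) : K)
    rw [Ee_mul]; push_cast; rfl

lemma prod_coords (m : Fin (2*k) →₀ ℕ) (x : Fin (2*k) → Kˣ) :
    ∏ i, coords K k x i ^ m i = ((Ee K k ⇑m x : Kˣ) : K) := by
  have := eval_monomial_unit m x
  rwa [eval_monomial, one_mul, Finsupp.prod_fintype _ _ (fun i => pow_zero _)] at this

lemma step1 (f : MvPolynomial (Fin (2*k)) K)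
    (hhom : ∃ d, f.IsHomogeneous d)
    (hvan : ∀ x : Fin (2*k) → Kˣ, eval (coords K k x) f = 0)
    (J : Ideal (MvPolynomial (Fin (2*k)) K))
    (hbin : ∀ a b : Fin (2*k) →₀ ℕ, (∑ i, a i) = (∑ i, b i) →
      (∀ x, Ee K k ⇑a x = Ee K k ⇑b x) → monomial a (1:K) - monomial b 1 ∈ J) :
    f ∈ J := by
  classical
  obtain ⟨d, hd⟩ := hhom
  have hdeg : ∀ m ∈ f.support, ∑ i, m i = d := by
    intro m hm
    have h1 := hd (mem_support_iff.mp hm)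
    rw [← fdeg, Finsupp.degree_eq_weight_one]
    exact h1
  -- coefficient sums along character fibers vanish
  have hzero : ∀ g ∈ f.support.image (chm K k),
      (∑ m ∈ f.support.filter (fun m => chm K k m = g), coeff m f) = 0 := by
    intro g hg
    set T := f.support.image (chm K k) with hT
    set w : ((Fin (2*k) → Kˣ) →* K) → K :=
      fun g => ∑ m ∈ f.support.filter (fun m => chm K k m = g), coeff m f with hw
    have hfun : (∑ g ∈ T, w g • (⇑g : (Fin (2*k) → Kˣ) → K)) = 0 := by
      funext x
      have he := hvan x
      rw [eval_eq'] at he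
      have : ∑ m ∈ f.support, coeff m f * ∏ i, coords K k x i ^ m i
          = ∑ g ∈ T, w g * g x := by
        rw [← Finset.sum_fiberwise_of_maps_to (g := chm K k) (t := T)
          (fun m hm => Finset.mem_image_of_mem _ hm)]
        refine Finset.sum_congr rfl fun g hg' => ?_
        rw [hw, Finset.sum_mul]
        refine Finset.sum_congr rfl fun m hm => ?_
        have hmg : chm K k m = g := (Finset.mem_filter.1 hm).2
        rw [prod_coords, ← hmg]
        rfl
      rw [this] at he
      simpa using he
    have li := linearIndependent_monoidHom (Fin (2*k) → Kˣ) K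
    exact linearIndependent_iff'.1 li T w hfun g hg
  -- decompose f along fibers
  rw [f.as_sum,
    ← Finset.sum_fiberwise_of_maps_to (g := chm K k) (t := f.support.image (chm K k))
      (fun m hm => Finset.mem_image_of_mem _ hm)]
  apply Ideal.sum_mem
  intro g hg
  obtain ⟨m₀, hm₀s, hm₀g⟩ := Finset.mem_image.1 hg
  set F := f.support.filter (fun m => chm K k m = g) with hF
  have hm₀F : m₀ ∈ F := Finset.mem_filter.2 ⟨hm₀s, hm₀g⟩
  have hsplit : ∑ m ∈ F, (monomial m) (coeff m f)
      = (∑ m ∈ F, (coeff m f) • (monomial m (1:K) - monomial m₀ 1))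
        + (∑ m ∈ F, coeff m f) • monomial m₀ (1:K) := by
    rw [Finset.sum_smul, ← Finset.sum_add_distrib]
    refine Finset.sum_congr rfl fun m _ => ?_
    rw [smul_sub, sub_add_cancel, smul_monomial, smul_eq_mul, mul_one]
  rw [hsplit, hzero g hg, zero_smul, add_zero]
  apply Ideal.sum_mem
  intro m hm
  have hmF := Finset.mem_filter.1 hm
  rw [smul_eq_C_mul]
  refine Ideal.mul_mem_left _ _ (hbin m m₀ ?_ ?_)
  · rw [hdeg m hmF.1, hdeg m₀ hm₀s]
  · intro x
    have h2 : chm K k m x = chm K k m₀ x := by rw [hmF.2, hm₀g]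
    have h3 : ((Ee K k ⇑m x : Kˣ) : K) = ((Ee K k ⇑m₀ x : Kˣ) : K) := h2
    exact Units.ext h3

/-- The right-hand side ideal. -/
def Jgen (q k : ℕ) (K : Type) [Field K] : Ideal (MvPolynomial (Fin (2 * k)) K) :=
  Ideal.span
      ({p : MvPolynomial (Fin (2 * k)) K |
          ∃ i j : Fin (2 * k), p = X i ^ (q - 1) - X j ^ (q - 1)} ∪
       {p : MvPolynomial (Fin (2 * k)) K |
          ∃ (A : Finset ℕ) (r : ℕ), A ⊆ Finset.range (2 * k) ∧ 0 ∈ A ∧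
            A.card = (Finset.range (2 * k) \ A).card ∧
            1 ≤ r ∧ r ≤ q - 2 ∧ p = fsr K q k A r})

lemma pow_mem_Jgen (i j : Fin (2*k)) : X i ^ (q-1) - X j ^ (q-1) ∈ Jgen q k K :=
  Ideal.subset_span (Or.inl ⟨i, j, rfl⟩)

lemma fsr_mem_Jgen (hA : A ⊆ range (2*k)) (h0 : 0 ∈ A)
    (hcards : A.card = (range (2*k) \ A).card) (hr1 : 1 ≤ r) (hr2 : r ≤ q - 2) :
    fsr K q k A r ∈ Jgen q k K :=
  Ideal.subset_span (Or.inr ⟨A, r, hA, h0, hcards, hr1, hr2, rfl⟩)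

lemma natinj {x y : ℕ} (hx : x < q-1) (hy : y < q-1) (hxy : (x : ZMod (q-1)) = y) : x = y := by
  have := congrArg ZMod.val hxy
  rwa [ZMod.val_natCast_of_lt hx, ZMod.val_natCast_of_lt hy] at this

lemma fs_sum_add (u v : Fin (2*k) →₀ ℕ) : ∑ i, (u + v) i = (∑ i, u i) + ∑ i, v i := by
  simp [Finsupp.add_apply, Finset.sum_add_distrib]

lemma fs_sum_single (i : Fin (2*k)) (c : ℕ) : ∑ l, (Finsupp.single i c) l = c := by
  simp [Finsupp.single_apply]

lemma bin_factor (c a b : Fin (2*k) →₀ ℕ) :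
    monomial (c + a) (1:K) - monomial (c + b) 1
      = monomial c 1 * (monomial a (1:K) - monomial b 1) := by
  rw [mul_sub, monomial_mul, monomial_mul, one_mul]

lemma Ee_congr (hcard : Fintype.card K = q) (a b : Fin (2*k) → ℕ)
    (h : ∀ i, a i ≡ b i [MOD q-1]) (x : Fin (2*k) → Kˣ) : Ee K k a x = Ee K k b x :=
  Finset.prod_congr rfl fun i _ => unit_pow_congr hcard _ (h i)

lemma Ee_cancel (hcard : Fintype.card K = q) (c a b : Fin (2*k) →₀ ℕ)
    (h : ∀ x, Ee K k ⇑(c + a) x = Ee K k ⇑(c + b) x) (x : Fin (2*k) → Kˣ) :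
    Ee K k ⇑a x = Ee K k ⇑b x := by
  have h1 := h x
  rw [Finsupp.coe_add, Ee_add, Finsupp.coe_add, Ee_add] at h1
  exact mul_left_cancel h1

lemma terminal_core (hq : 2 < q) (hk : 2 ≤ k) (hcard : Fintype.card K = q)
    (a b : Fin (2*k) →₀ ℕ)
    (hdisj : ∀ i, a i = 0 ∨ b i = 0)
    (hbd : ∀ i, a i ≤ q-2 ∧ b i ≤ q-2)
    (hsum : ∑ i, a i = ∑ i, b i)
    (hpos : 0 < ∑ i, a i)
    (hE : ∀ x, Ee K k ⇑a x = Ee K k ⇑b x)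
    (ha0 : 0 < a ⟨0, by omega⟩) :
    monomial a (1:K) - monomial b 1 ∈ Jgen q k K := by
  classical
  haveI : NeZero (q-1) := ⟨by omega⟩
  have hk0 : 0 < 2*k := by omega
  set i0 : Fin (2*k) := ⟨0, hk0⟩ with hi0
  have hvert : ∀ j, Cv k ⇑a j ≡ Cv k ⇑b j [MOD q-1] := eq_to_congr hcard _ _ hE
  set D : Fin (2*k) → ZMod (q-1) :=
    fun i => (a i : ZMod (q-1)) - (b i : ZMod (q-1)) with hD
  have hDrot : ∀ i, D (finRotate (2*k) i) = - D i := by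
    intro i
    have h1 := hvert (finRotate (2*k) i)
    rw [← ZMod.natCast_eq_natCast_iff] at h1
    unfold Cv at h1
    rw [Equiv.symm_apply_apply] at h1
    push_cast at h1
    simp only [hD]
    linear_combination h1
  have hprop : ∀ m (h : m < 2*k), D ⟨m, h⟩ = (-1)^m * D i0 := by
    intro m
    induction m with
    | zero => intro h; rw [pow_zero, one_mul]
    | succ m ihm =>
      intro h
      have hm : m < 2*k := by omega
      have hrot : finRotate (2*k) ⟨m, hm⟩ = ⟨m+1, h⟩ := by
        apply Fin.ext
        rw [rot_val ⟨m, hm⟩ (show ((⟨m, hm⟩ : Fin (2*k)) : ℕ) + 1 < 2*k from h)]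
      rw [← hrot, hDrot, ihm hm, pow_succ]
      ring
  have hD0 : D i0 ≠ 0 := by
    intro h0
    have hab : ∀ i : Fin (2*k), a i = b i := by
      intro i
      have hz := hprop i.1 i.2
      rw [Fin.eta, h0, mul_zero] at hz
      have hz2 : (a i : ZMod (q-1)) = b i := by
        simp only [hD] at hz
        rwa [sub_eq_zero] at hz
      exact natinj (by have := (hbd i).1; omega) (by have := (hbd i).2; omega) hz2
    have hzz : ∑ i, a i = 0 := by
      refine Finset.sum_eq_zero fun i _ => ?_
      rcases hdisj i with h | h
      · exact h
      · rw [hab i, h]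
    omega
  have hDne : ∀ i : Fin (2*k), D i ≠ 0 := by
    intro i hzero
    have hz := hprop i.1 i.2
    rw [Fin.eta, hzero] at hz
    rcases Nat.even_or_odd i.1 with he | ho
    · rw [he.neg_one_pow, one_mul] at hz; exact hD0 hz.symm
    · rw [ho.neg_one_pow, neg_one_mul] at hz; exact hD0 (neg_eq_zero.1 hz.symm)
  set AA : Finset ℕ := (Finset.univ.filter (fun i : Fin (2*k) => 0 < a i)).image Fin.val
    with hAA
  have hmem : ∀ i : Fin (2*k), ((i:ℕ) ∈ AA ↔ 0 < a i) := by
    intro i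
    simp only [hAA, Finset.mem_image, Finset.mem_filter, Finset.mem_univ, true_and]
    constructor
    · rintro ⟨i', hi', hv⟩; rwa [← Fin.val_injective hv]
    · intro h; exact ⟨i, h, rfl⟩
  have hAsub : AA ⊆ range (2*k) := by
    intro m hm
    obtain ⟨i', _, rfl⟩ := Finset.mem_image.1 hm
    exact mem_range.2 i'.2
  have h0A : (0:ℕ) ∈ AA := (hmem i0).2 ha0
  set r' := a i0 with hr'
  have hr1 : 1 ≤ r' := ha0
  have hr2 : r' ≤ q - 2 := (hbd i0).1
  have hbnd := fun m => rho_bounds (A := AA) hq hr1 hr2 m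
  have hz : ∀ (i : Fin (2*k)), ((i:ℕ) ∈ AA → b i = 0) ∧ ((i:ℕ) ∉ AA → a i = 0) := by
    intro i
    constructor
    · intro hiA
      rcases hdisj i with h | h
      · exfalso; have := (hmem i).1 hiA; omega
      · exact h
    · intro hiA
      have hni : ¬ 0 < a i := fun hp => hiA ((hmem i).2 hp)
      omega
  have main : ∀ m (h : m < 2*k),
      a ⟨m,h⟩ = (if m ∈ AA then rho q AA r' m else 0)
      ∧ b ⟨m,h⟩ = (if m ∈ AA then 0 else rho q AA r' m) := by
    intro m
    induction m with
    | zero =>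
      intro h
      have he0 : (⟨0,h⟩ : Fin (2*k)) = i0 := rfl
      rw [he0, if_pos h0A, if_pos h0A]
      exact ⟨rfl, (hz i0).1 h0A⟩
    | succ m ihm =>
      intro h
      have hm : m < 2*k := by omega
      obtain ⟨iha, ihb⟩ := ihm hm
      have hrot : finRotate (2*k) ⟨m, hm⟩ = ⟨m+1, h⟩ := by
        apply Fin.ext
        rw [rot_val ⟨m, hm⟩ (show ((⟨m, hm⟩ : Fin (2*k)) : ℕ) + 1 < 2*k from h)]
      have hrel : D ⟨m+1, h⟩ = - D ⟨m, hm⟩ := by rw [← hrot, hDrot]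
      simp only [hD] at hrel
      have hsub : ((q - 1 - rho q AA r' m : ℕ) : ZMod (q-1))
          = - (rho q AA r' m : ZMod (q-1)) := by
        rw [Nat.cast_sub (by have := (hbnd m).2; omega)]
        simp
      by_cases hmA : m ∈ AA <;> by_cases hm1A : m+1 ∈ AA
      · -- both in A : a (m+1) = q-1-rho m
        have hrv : rho q AA r' (m+1) = q - 1 - rho q AA r' m := by
          show (if (m ∈ AA ↔ m + 1 ∈ AA) then q - 1 - rho q AA r' m else rho q AA r' m)
            = q - 1 - rho q AA r' m
          rw [if_pos (iff_of_true hmA hm1A)]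
        have hbz1 : b ⟨m+1, h⟩ = 0 := (hz ⟨m+1, h⟩).1 hm1A
        have hbz0 : b ⟨m, hm⟩ = 0 := (hz ⟨m, hm⟩).1 hmA
        have heq : ((a ⟨m+1, h⟩ : ℕ) : ZMod (q-1)) = ((q - 1 - rho q AA r' m : ℕ) : ZMod (q-1)) := by
          rw [hsub]
          rw [hbz1, hbz0, iha, if_pos hmA] at hrel
          push_cast at hrel
          linear_combination hrel
        have := natinj (by have := (hbd ⟨m+1,h⟩).1; omega)
          (by have := (hbnd m).1; omega) heq
        rw [if_pos hm1A, if_pos hm1A, hrv]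
        exact ⟨this, hbz1⟩
      · -- m in A, m+1 not : b (m+1) = rho m
        have hrv : rho q AA r' (m+1) = rho q AA r' m := by
          show (if (m ∈ AA ↔ m + 1 ∈ AA) then q - 1 - rho q AA r' m else rho q AA r' m)
            = rho q AA r' m
          rw [if_neg (by tauto)]
        have haz1 : a ⟨m+1, h⟩ = 0 := (hz ⟨m+1, h⟩).2 hm1A
        have hbz0 : b ⟨m, hm⟩ = 0 := (hz ⟨m, hm⟩).1 hmA
        have heq : ((b ⟨m+1, h⟩ : ℕ) : ZMod (q-1)) = ((rho q AA r' m : ℕ) : ZMod (q-1)) := by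
          rw [haz1, hbz0, iha, if_pos hmA] at hrel
          push_cast at hrel
          linear_combination - hrel
        have := natinj (by have := (hbd ⟨m+1,h⟩).2; omega)
          (by have := (hbnd m).2; omega) heq
        rw [if_neg hm1A, if_neg hm1A, hrv]
        exact ⟨haz1, this⟩
      · -- m not in A, m+1 in : a (m+1) = rho m
        have hrv : rho q AA r' (m+1) = rho q AA r' m := by
          show (if (m ∈ AA ↔ m + 1 ∈ AA) then q - 1 - rho q AA r' m else rho q AA r' m)
            = rho q AA r' m
          rw [if_neg (by tauto)]
        have hbz1 : b ⟨m+1, h⟩ = 0 := (hz ⟨m+1, h⟩).1 hm1A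
        have haz0 : a ⟨m, hm⟩ = 0 := (hz ⟨m, hm⟩).2 hmA
        have heq : ((a ⟨m+1, h⟩ : ℕ) : ZMod (q-1)) = ((rho q AA r' m : ℕ) : ZMod (q-1)) := by
          rw [hbz1, haz0, ihb, if_neg hmA] at hrel
          push_cast at hrel
          linear_combination hrel
        have := natinj (by have := (hbd ⟨m+1,h⟩).1; omega)
          (by have := (hbnd m).2; omega) heq
        rw [if_pos hm1A, if_pos hm1A, hrv]
        exact ⟨this, hbz1⟩
      · -- both not in A : b (m+1) = q-1-rho m
        have hrv : rho q AA r' (m+1) = q - 1 - rho q AA r' m := by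
          show (if (m ∈ AA ↔ m + 1 ∈ AA) then q - 1 - rho q AA r' m else rho q AA r' m)
            = q - 1 - rho q AA r' m
          rw [if_pos (iff_of_false hmA hm1A)]
        have haz1 : a ⟨m+1, h⟩ = 0 := (hz ⟨m+1, h⟩).2 hm1A
        have haz0 : a ⟨m, hm⟩ = 0 := (hz ⟨m, hm⟩).2 hmA
        have heq : ((b ⟨m+1, h⟩ : ℕ) : ZMod (q-1)) = ((q - 1 - rho q AA r' m : ℕ) : ZMod (q-1)) := by
          rw [hsub]
          rw [haz1, haz0, ihb, if_neg hmA] at hrel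
          push_cast at hrel
          linear_combination - hrel
        have := natinj (by have := (hbd ⟨m+1,h⟩).2; omega)
          (by have := (hbnd m).1; omega) heq
        rw [if_neg hm1A, if_neg hm1A, hrv]
        exact ⟨haz1, this⟩
  -- identify the binomial with fsr
  have haexp : a = Finsupp.equivFunOnFinite.symm (aexp q k AA r') := by
    apply Finsupp.ext
    intro i
    have h1 := (main i.1 i.2).1
    rw [Fin.eta] at h1
    rw [Finsupp.coe_equivFunOnFinite_symm]
    exact h1
  have hbexp : b = Finsupp.equivFunOnFinite.symm (bexp q k AA r') := by
    apply Finsupp.ext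
    intro i
    have h1 := (main i.1 i.2).2
    rw [Fin.eta] at h1
    rw [Finsupp.coe_equivFunOnFinite_symm]
    exact h1
  -- cardinality condition
  have hSA : ((∑ i, a i : ℕ) : ℤ)
      = ∑ m ∈ range (2*k), (if m ∈ AA then (rho q AA r' m : ℤ) else 0) := by
    push_cast
    rw [← Fin.sum_univ_eq_sum_range (fun m => if m ∈ AA then (rho q AA r' m : ℤ) else 0) (2*k)]
    refine Finset.sum_congr rfl fun i _ => ?_
    have h1 := (main i.1 i.2).1
    rw [Fin.eta] at h1
    rw [h1]
    split_ifs <;> simp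
  have hSB : ((∑ i, b i : ℕ) : ℤ)
      = ∑ m ∈ range (2*k), (if m ∈ AA then 0 else (rho q AA r' m : ℤ)) := by
    push_cast
    rw [← Fin.sum_univ_eq_sum_range (fun m => if m ∈ AA then 0 else (rho q AA r' m : ℤ)) (2*k)]
    refine Finset.sum_congr rfl fun i _ => ?_
    have h1 := (main i.1 i.2).2
    rw [Fin.eta] at h1
    rw [h1]
    split_ifs <;> simp
  have hsr := sum_rho (A := AA) hq hr1 hr2 h0A k
  have hfA : (range (2*k)).filter (fun m => m ∈ AA) = AA := by
    ext m
    simp only [mem_filter, mem_range]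
    exact ⟨fun hh => hh.2, fun hh => ⟨mem_range.1 (hAsub hh), hh⟩⟩
  have hfB : (range (2*k)).filter (fun m => m ∉ AA) = range (2*k) \ AA := by
    ext m; simp [mem_sdiff]
  rw [hfA, hfB] at hsr
  have hzero : ((q:ℤ) - 1) * ((AA.card : ℤ) - ((range (2*k) \ AA).card : ℤ)) = 0 := by
    rw [← hsr, ← hSA, ← hSB, hsum]
    ring
  have hq1 : ((q:ℤ) - 1) ≠ 0 := by
    have : (2:ℤ) < (q:ℤ) := by exact_mod_cast hq
    omega
  have hcards : AA.card = (range (2*k) \ AA).card := by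
    rcases mul_eq_zero.1 hzero with h | h
    · exact absurd h hq1
    · have := sub_eq_zero.1 h
      exact_mod_cast this
  have hfsr : monomial a (1:K) - monomial b 1 = fsr K q k AA r' := by
    rw [haexp, hbexp]; rfl
  rw [hfsr]
  exact fsr_mem_Jgen hAsub h0A hcards hr1 hr2

lemma terminal (hq : 2 < q) (hk : 2 ≤ k) (hcard : Fintype.card K = q)
    (a b : Fin (2*k) →₀ ℕ)
    (hdisj : ∀ i, a i = 0 ∨ b i = 0)
    (hbd : ∀ i, a i ≤ q-2 ∧ b i ≤ q-2)
    (hsum : ∑ i, a i = ∑ i, b i)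
    (hpos : 0 < ∑ i, a i)
    (hE : ∀ x, Ee K k ⇑a x = Ee K k ⇑b x) :
    monomial a (1:K) - monomial b 1 ∈ Jgen q k K := by
  classical
  haveI : NeZero (q-1) := ⟨by omega⟩
  have hk0 : 0 < 2*k := by omega
  by_cases ha0 : 0 < a ⟨0, by omega⟩
  · exact terminal_core hq hk hcard a b hdisj hbd hsum hpos hE ha0
  by_cases hb0 : 0 < b ⟨0, by omega⟩
  · have hpos' : 0 < ∑ i, b i := hsum ▸ hpos
    have h1 := terminal_core hq hk hcard b a (fun i => (hdisj i).symm)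
      (fun i => (hbd i).symm) hsum.symm hpos' (fun x => (hE x).symm) hb0
    have h2 : monomial a (1:K) - monomial b 1 = -(monomial b (1:K) - monomial a 1) := by ring
    rw [h2]; exact neg_mem h1
  · exfalso
    set i0 : Fin (2*k) := ⟨0, hk0⟩ with hi0
    have hvert : ∀ j, Cv k ⇑a j ≡ Cv k ⇑b j [MOD q-1] := eq_to_congr hcard _ _ hE
    set D : Fin (2*k) → ZMod (q-1) :=
      fun i => (a i : ZMod (q-1)) - (b i : ZMod (q-1)) with hD
    have hDrot : ∀ i, D (finRotate (2*k) i) = - D i := by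
      intro i
      have h1 := hvert (finRotate (2*k) i)
      rw [← ZMod.natCast_eq_natCast_iff] at h1
      unfold Cv at h1
      rw [Equiv.symm_apply_apply] at h1
      push_cast at h1
      simp only [hD]
      linear_combination h1
    have hprop : ∀ m (h : m < 2*k), D ⟨m, h⟩ = (-1)^m * D i0 := by
      intro m
      induction m with
      | zero => intro h; rw [pow_zero, one_mul]
      | succ m ihm =>
        intro h
        have hm : m < 2*k := by omega
        have hrot : finRotate (2*k) ⟨m, hm⟩ = ⟨m+1, h⟩ := by
          apply Fin.ext
          rw [rot_val ⟨m, hm⟩ (show ((⟨m, hm⟩ : Fin (2*k)) : ℕ) + 1 < 2*k from h)]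
        rw [← hrot, hDrot, ihm hm, pow_succ]
        ring
    have hD0 : D i0 = 0 := by
      simp only [hD]
      have h1 : a i0 = 0 := by omega
      have h2 : b i0 = 0 := by omega
      rw [h1, h2, Nat.cast_zero, sub_zero]
    have hab : ∀ i : Fin (2*k), a i = b i := by
      intro i
      have hz := hprop i.1 i.2
      rw [Fin.eta, hD0, mul_zero] at hz
      have hz2 : (a i : ZMod (q-1)) = b i := by
        simp only [hD] at hz
        rwa [sub_eq_zero] at hz
      exact natinj (by have := (hbd i).1; omega) (by have := (hbd i).2; omega) hz2
    have hzz : ∑ i, a i = 0 := by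
      refine Finset.sum_eq_zero fun i _ => ?_
      rcases hdisj i with h | h
      · exact h
      · rw [hab i, h]
    omega

lemma shift_congr (hq : 2 < q) (a : Fin (2*k) →₀ ℕ) (i j : Fin (2*k)) (hge : q-1 ≤ a i) :
    ∀ l, (a - Finsupp.single i (q-1) + Finsupp.single j (q-1)) l ≡ a l [MOD q-1] := by
  intro l
  rw [← ZMod.natCast_eq_natCast_iff]
  rw [Finsupp.add_apply, Finsupp.tsub_apply]
  have hsl : Finsupp.single i (q-1) l ≤ a l := by
    rw [Finsupp.single_apply]
    split_ifs with h
    · rw [← h]; exact hge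
    · exact Nat.zero_le _
  rw [Nat.cast_add, Nat.cast_sub hsl]
  have hz1 : ((Finsupp.single i (q-1) l : ℕ) : ZMod (q-1)) = 0 := by
    rw [Finsupp.single_apply]; split_ifs <;> simp
  have hz2 : ((Finsupp.single j (q-1) l : ℕ) : ZMod (q-1)) = 0 := by
    rw [Finsupp.single_apply]; split_ifs <;> simp
  rw [hz1, hz2]
  ring

lemma key (hq : 2 < q) (hk : 2 ≤ k) (hcard : Fintype.card K = q) :
    ∀ n (a b : Fin (2*k) →₀ ℕ), (∑ i, a i) = n → (∑ i, b i) = n →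
      (∀ x, Ee K k ⇑a x = Ee K k ⇑b x) →
      monomial a (1:K) - monomial b 1 ∈ Jgen q k K := by
  intro n
  induction n using Nat.strong_induction_on with
  | _ n ih =>
  intro a b ha hb hE
  classical
  by_cases hcommon : ∃ i, 0 < a i ∧ 0 < b i
  · obtain ⟨i, hai, hbi⟩ := hcommon
    set c1 : Fin (2*k) →₀ ℕ := Finsupp.single i 1 with hc1
    set a1 : Fin (2*k) →₀ ℕ := a - c1 with ha1
    set b1 : Fin (2*k) →₀ ℕ := b - c1 with hb1
    have hca : c1 ≤ a := Finsupp.single_le_iff.2 hai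
    have hcb : c1 ≤ b := Finsupp.single_le_iff.2 hbi
    have ha' : c1 + a1 = a := by rw [ha1, add_comm]; exact tsub_add_cancel_of_le hca
    have hb' : c1 + b1 = b := by rw [hb1, add_comm]; exact tsub_add_cancel_of_le hcb
    have hain : a i ≤ ∑ l, a l :=
      Finset.single_le_sum (f := fun l => a l) (fun _ _ => Nat.zero_le _) (mem_univ i)
    have hcsum : ∑ l, c1 l = 1 := by rw [hc1]; exact fs_sum_single i 1
    have hsa : ∑ l, a1 l = n - 1 := by
      have h1 := fs_sum_add c1 a1
      rw [ha'] at h1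
      omega
    have hsb : ∑ l, b1 l = n - 1 := by
      have h1 := fs_sum_add c1 b1
      rw [hb'] at h1
      omega
    have hE' : ∀ x, Ee K k ⇑a1 x = Ee K k ⇑b1 x := by
      refine Ee_cancel hcard c1 _ _ (fun x => ?_)
      rw [ha', hb']; exact hE x
    have hbf := bin_factor (K := K) c1 a1 b1
    rw [ha', hb'] at hbf
    rw [hbf]
    exact Ideal.mul_mem_left _ _ (ih (n-1) (by omega) _ _ hsa hsb hE')
  · push_neg at hcommon
    have hdisj : ∀ i, a i = 0 ∨ b i = 0 := by
      intro i
      rcases Nat.eq_zero_or_pos (a i) with h | h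
      · exact Or.inl h
      · have := hcommon i h; omega
    by_cases hn0 : n = 0
    · have hall : ∀ (c : Fin (2*k) →₀ ℕ), (∑ l, c l) = n → c = 0 := by
        intro c hc
        apply Finsupp.ext; intro l
        have : c l ≤ ∑ m, c m :=
          Finset.single_le_sum (f := fun m => c m) (fun _ _ => Nat.zero_le _) (mem_univ l)
        simp only [Finsupp.coe_zero, Pi.zero_apply]
        omega
      rw [hall a ha, hall b hb, sub_self]
      exact zero_mem _
    · have hbpos : ∃ j, 0 < b j := by
        by_contra hc
        push_neg at hc
        have : ∑ l, b l = 0 := Finset.sum_eq_zero fun l _ => by have := hc l; omega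
        omega
      have hapos : ∃ i, 0 < a i := by
        by_contra hc
        push_neg at hc
        have : ∑ l, a l = 0 := Finset.sum_eq_zero fun l _ => by have := hc l; omega
        omega
      by_cases hbig : ∃ i, q - 1 ≤ a i
      · obtain ⟨i, hbigi⟩ := hbig
        obtain ⟨j0, hj0⟩ := hbpos
        set s := Finsupp.single i (q-1) with hs
        set t := Finsupp.single j0 (q-1) with ht
        have hsa : s ≤ a := Finsupp.single_le_iff.2 hbigi
        have hcanc : (a - s) + s = a := tsub_add_cancel_of_le hsa
        have hpiece : monomial a (1:K) - monomial ((a - s) + t) 1 ∈ Jgen q k K := by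
          have h2 := bin_factor (K := K) (a - s) s t
          rw [hcanc] at h2
          rw [h2, hs, ht, ← X_pow_eq_monomial, ← X_pow_eq_monomial]
          exact Ideal.mul_mem_left _ _ (pow_mem_Jgen i j0)
        have hcongr := shift_congr (k := k) hq a i j0 hbigi
        have hEa'' : ∀ x, Ee K k ⇑((a - s) + t) x = Ee K k ⇑a x :=
          fun x => Ee_congr hcard _ _ hcongr x
        -- second piece: common index j0
        set u := Finsupp.single j0 1 with hu
        have hua : u ≤ (a - s) + t := by
          refine Finsupp.single_le_iff.2 ?_
          rw [Finsupp.add_apply, ht, Finsupp.single_apply, if_pos rfl]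
          omega
        have hub : u ≤ b := Finsupp.single_le_iff.2 hj0
        have h4 : u + (((a - s) + t) - u) = (a - s) + t := by
          rw [add_comm]; exact tsub_add_cancel_of_le hua
        have h5 : u + (b - u) = b := by
          rw [add_comm]; exact tsub_add_cancel_of_le hub
        have hsum_as : ∑ l, ((a - s) + t) l = n := by
          have h6 := fs_sum_add (a - s) t
          have h7 := fs_sum_add (a - s) s
          rw [hcanc] at h7
          have h8 := fs_sum_single i (q-1)
          have h9 := fs_sum_single j0 (q-1)
          rw [← hs] at h8
          rw [← ht] at h9
          omega
        have hsum_a2 : ∑ l, (((a - s) + t) - u) l = n - 1 := by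
          have h6 := fs_sum_add u (((a - s) + t) - u)
          rw [h4] at h6
          have h7 := fs_sum_single j0 1
          rw [← hu] at h7
          omega
        have hsum_b2 : ∑ l, (b - u) l = n - 1 := by
          have h6 := fs_sum_add u (b - u)
          rw [h5] at h6
          have h7 := fs_sum_single j0 1
          rw [← hu] at h7
          omega
        have hn1 : 0 < n := by omega
        have hE2 : ∀ x, Ee K k ⇑(((a - s) + t) - u) x = Ee K k ⇑(b - u) x := by
          refine Ee_cancel hcard u _ _ (fun x => ?_)
          rw [h4, h5]
          exact (hEa'' x).trans (hE x)
        have hpiece2 : monomial ((a - s) + t) (1:K) - monomial b 1 ∈ Jgen q k K := by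
          have h10 := bin_factor (K := K) u (((a - s) + t) - u) (b - u)
          rw [h4, h5] at h10
          rw [h10]
          exact Ideal.mul_mem_left _ _ (ih (n-1) (by omega) _ _ hsum_a2 hsum_b2 hE2)
        have hfinal : monomial a (1:K) - monomial b 1
            = (monomial a (1:K) - monomial ((a - s) + t) 1)
              + (monomial ((a - s) + t) (1:K) - monomial b 1) := by ring
        rw [hfinal]
        exact Ideal.add_mem _ hpiece hpiece2
      · by_cases hbig2 : ∃ j, q - 1 ≤ b j
        · -- mirror image
          obtain ⟨i, hbigi⟩ := hbig2
          obtain ⟨j0, hj0⟩ := hapos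
          set s := Finsupp.single i (q-1) with hs
          set t := Finsupp.single j0 (q-1) with ht
          have hsa : s ≤ b := Finsupp.single_le_iff.2 hbigi
          have hcanc : (b - s) + s = b := tsub_add_cancel_of_le hsa
          have hpiece : monomial b (1:K) - monomial ((b - s) + t) 1 ∈ Jgen q k K := by
            have h2 := bin_factor (K := K) (b - s) s t
            rw [hcanc] at h2
            rw [h2, hs, ht, ← X_pow_eq_monomial, ← X_pow_eq_monomial]
            exact Ideal.mul_mem_left _ _ (pow_mem_Jgen i j0)
          have hcongr := shift_congr (k := k) hq b i j0 hbigi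
          have hEb'' : ∀ x, Ee K k ⇑((b - s) + t) x = Ee K k ⇑b x :=
            fun x => Ee_congr hcard _ _ hcongr x
          set u := Finsupp.single j0 1 with hu
          have hua : u ≤ (b - s) + t := by
            refine Finsupp.single_le_iff.2 ?_
            rw [Finsupp.add_apply, ht, Finsupp.single_apply, if_pos rfl]
            omega
          have hub : u ≤ a := Finsupp.single_le_iff.2 hj0
          have h4 : u + (((b - s) + t) - u) = (b - s) + t := by
            rw [add_comm]; exact tsub_add_cancel_of_le hua
          have h5 : u + (a - u) = a := by
            rw [add_comm]; exact tsub_add_cancel_of_le hub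
          have hsum_bs : ∑ l, ((b - s) + t) l = n := by
            have h6 := fs_sum_add (b - s) t
            have h7 := fs_sum_add (b - s) s
            rw [hcanc] at h7
            have h8 := fs_sum_single i (q-1)
            have h9 := fs_sum_single j0 (q-1)
            rw [← hs] at h8
            rw [← ht] at h9
            omega
          have hsum_b2 : ∑ l, (((b - s) + t) - u) l = n - 1 := by
            have h6 := fs_sum_add u (((b - s) + t) - u)
            rw [h4] at h6
            have h7 := fs_sum_single j0 1
            rw [← hu] at h7
            omega
          have hsum_a2 : ∑ l, (a - u) l = n - 1 := by
            have h6 := fs_sum_add u (a - u)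
            rw [h5] at h6
            have h7 := fs_sum_single j0 1
            rw [← hu] at h7
            omega
          have hE2 : ∀ x, Ee K k ⇑(a - u) x = Ee K k ⇑(((b - s) + t) - u) x := by
            refine Ee_cancel hcard u _ _ (fun x => ?_)
            rw [h4, h5]
            exact (hE x).trans (hEb'' x).symm
          have hpiece2 : monomial a (1:K) - monomial ((b - s) + t) 1 ∈ Jgen q k K := by
            have h10 := bin_factor (K := K) u (a - u) (((b - s) + t) - u)
            rw [h4, h5] at h10
            rw [h10]
            exact Ideal.mul_mem_left _ _ (ih (n-1) (by omega) _ _ hsum_a2 hsum_b2 hE2)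
          have hfinal : monomial a (1:K) - monomial b 1
              = (monomial a (1:K) - monomial ((b - s) + t) 1)
                - (monomial b (1:K) - monomial ((b - s) + t) 1) := by ring
          rw [hfinal]
          exact Ideal.sub_mem _ hpiece2 hpiece
        · -- terminal case
          push_neg at hbig
          push_neg at hbig2
          refine terminal hq hk hcard a b hdisj (fun i => ⟨?_, ?_⟩) (by rw [ha, hb]) (by omega) hE
          · have := hbig i; omega
          · have := hbig2 i; omega

end Main
end CycleAux

/-- Let `G = C_{2k}` (`k ≥ 2`, `s = 2k`).  Then `I(X)` is generated by the
toric relations `t_i^{q−1} − t_j^{q−1}` together with all the binomials `f_σ^r` for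
`r ∈ {1,…,q−2}` and `σ = A ⊔ B` a partition of the index set with `|A| = |B|` and
`0 ∈ A` (paper: `1 ∈ A`). -/
theorem cycle_vanishing_ideal_generators
    (q k : ℕ) (hq : 2 < q) (hk : 2 ≤ k) (K : Type) [Field K] [Fintype K]
    (hcard : Fintype.card K = q) :
    cycleVanishingIdeal K k = Ideal.span
      ({p : MvPolynomial (Fin (2 * k)) K |
          ∃ i j : Fin (2 * k), p = X i ^ (q - 1) - X j ^ (q - 1)} ∪
       {p : MvPolynomial (Fin (2 * k)) K |
          ∃ (A : Finset ℕ) (r : ℕ), A ⊆ Finset.range (2 * k) ∧ 0 ∈ A ∧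
            A.card = (Finset.range (2 * k) \ A).card ∧
            1 ≤ r ∧ r ≤ q - 2 ∧ p = fsr K q k A r}) := by
  apply le_antisymm
  · rw [cycleVanishingIdeal]
    apply Ideal.span_le.2
    rintro f ⟨hhom, hvan⟩
    have hmem : f ∈ CycleAux.Jgen q k K := by
      refine CycleAux.step1 f hhom (fun x => hvan x) (CycleAux.Jgen q k K) ?_
      intro a b hs hE
      exact CycleAux.key hq hk hcard (∑ i, a i) a b rfl hs.symm hE
    exact hmem
  · apply Ideal.span_le.2
    intro p hp
    rw [cycleVanishingIdeal]
    exact Ideal.subset_span (CycleAux.gens_sub_lhs hq (by omega) hcard hp)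
end
end

section
/- Let G = C_{2k} be the even cycle (k ≥ 2, s = 2k). Fix 1 ≤ i ≤ s−2 and let σ_i : S → S be the K-algebra automorphism determined by σ_i(t_i) = t_{i+2}, σ_i(t_{i+2}) = t_i and σ_i(t_l) = t_l for l ∉ {i, i+2}. Let F be the set of all binomials ±f_σ^r, where r ranges over {1,…,q−2} and σ = A ⊔ B ranges over the partitions of {1,…,s} with |A| = |B| and 1 ∈ A, such that f_σ^r ∈ I(X). Then σ_i maps F bijectively onto itself. -/
open MvPolynomial

noncomputable section

/-- The set `F` of all binomials `±f_σ^r`, for `r ∈ {1,…,q−2}` and `σ = A ⊔ B` a partition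
of the index set with `|A| = |B|` and `0 ∈ A` (paper: `1 ∈ A`), such that
`f_σ^r ∈ I(X)`. -/
def fsrSet (K : Type) [Field K] (q k : ℕ) : Set (MvPolynomial (Fin (2 * k)) K) :=
  {p | ∃ (A : Finset ℕ) (r : ℕ), A ⊆ Finset.range (2 * k) ∧ 0 ∈ A ∧
    A.card = (Finset.range (2 * k) \ A).card ∧ 1 ≤ r ∧ r ≤ q - 2 ∧
    fsr K q k A r ∈ cycleVanishingIdeal K k ∧
    (p = fsr K q k A r ∨ p = -fsr K q k A r)}

lemma rho_eq (q : ℕ) (A : Finset ℕ) (r : ℕ) (hr : r ≤ q - 1) (j : ℕ) :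
    rho q A r j = if ((j % 2 = 0 ↔ j ∈ A) ↔ 0 ∈ A) then r else q - 1 - r := by
  induction j with
  | zero => simp [rho]
  | succ n ih =>
    simp only [rho, ih]
    by_cases h0 : 0 ∈ A <;> by_cases h1 : n ∈ A <;> by_cases h2 : n + 1 ∈ A <;>
      simp [h0, h1, h2] <;> split_ifs <;> omega

lemma fin_swap_val {n : ℕ} (i i' j : Fin n) :
    ((Equiv.swap i i' j : Fin n) : ℕ) = Equiv.swap (i : ℕ) (i' : ℕ) (j : ℕ) := by
  rcases eq_or_ne j i with rfl | h1
  · simp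
  rcases eq_or_ne j i' with rfl | h2
  · simp
  rw [Equiv.swap_apply_of_ne_of_ne h1 h2,
    Equiv.swap_apply_of_ne_of_ne (fun h => h1 (Fin.val_injective h))
      (fun h => h2 (Fin.val_injective h))]

lemma mem_image_swap (A : Finset ℕ) (a b m : ℕ) :
    m ∈ A.image (Equiv.swap a b) ↔ Equiv.swap a b m ∈ A := by
  simp only [Finset.mem_image]
  constructor
  · rintro ⟨x, hx, rfl⟩
    rwa [Equiv.swap_apply_self]
  · intro h
    exact ⟨_, h, Equiv.swap_apply_self _ _ _⟩

lemma coe_finRotate' {n : ℕ} (j : Fin n) :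
    ((finRotate n j : Fin n) : ℕ) = ((j : ℕ) + 1) % n := by
  cases n with
  | zero => exact j.elim0
  | succ m =>
    rw [finRotate_succ_apply, Fin.val_add_one]
    split_ifs with h
    · have hj : (j : ℕ) = m := by rw [h]; rfl
      rw [hj, Nat.mod_self]
    · have hj : (j : ℕ) ≠ m := fun hc => h (Fin.ext hc)
      rw [Nat.mod_eq_of_lt (by omega : (j:ℕ) + 1 < m + 1)]

lemma mapDomain_swap {n : ℕ} (i i' : Fin n) (f f' : Fin n → ℕ)
    (h : ∀ j, f (Equiv.swap i i' j) = f' j) :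
    Finsupp.mapDomain (⇑(Equiv.swap i i')) (Finsupp.equivFunOnFinite.symm f)
      = Finsupp.equivFunOnFinite.symm f' := by
  ext j
  rw [Finsupp.mapDomain_equiv_apply, Equiv.symm_swap]
  simp only [Finsupp.coe_equivFunOnFinite_symm]
  exact h j

lemma rename_fsr (K : Type) [Field K] (q k : ℕ) (hq : 2 < q) (A : Finset ℕ) (r : ℕ)
    (hr2 : r ≤ q - 2) (i i' : Fin (2 * k)) (hii' : (i' : ℕ) = (i : ℕ) + 2) :
    rename (Equiv.swap i i') (fsr K q k A r)
      = fsr K q k (A.image (Equiv.swap (i : ℕ) (i' : ℕ)))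
          (if (0 ∈ A.image (Equiv.swap (i : ℕ) (i' : ℕ)) ↔ 0 ∈ A) then r else q - 1 - r) := by
  have hr : r ≤ q - 1 := by omega
  set A' := A.image (Equiv.swap (i : ℕ) (i' : ℕ)) with hA'
  set r' : ℕ := if (0 ∈ A' ↔ 0 ∈ A) then r else q - 1 - r with hr'def
  have hr'le : r' ≤ q - 1 := by rw [hr'def]; split_ifs <;> omega
  have hpar : ∀ m : ℕ, (Equiv.swap (i : ℕ) (i' : ℕ) m) % 2 = m % 2 := by
    intro m
    rcases eq_or_ne m (i : ℕ) with rfl | h1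
    · rw [Equiv.swap_apply_left, hii']; omega
    rcases eq_or_ne m (i' : ℕ) with rfl | h2
    · rw [Equiv.swap_apply_right, hii']; omega
    · rw [Equiv.swap_apply_of_ne_of_ne h1 h2]
  have h0 : ((0 : ℕ) ∈ A') = (Equiv.swap (i : ℕ) (i' : ℕ) 0 ∈ A) := by
    rw [hA']; exact propext (mem_image_swap _ _ _ _)
  have key : ∀ j : Fin (2 * k),
      (if ((Equiv.swap i i' j : Fin (2 * k)) : ℕ) ∈ A
        then rho q A r ((Equiv.swap i i' j : Fin (2 * k)) : ℕ) else 0)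
      = if (j : ℕ) ∈ A' then rho q A' r' (j : ℕ) else 0 := by
    intro j
    have h1 : ((j : ℕ) ∈ A') = (Equiv.swap (i : ℕ) (i' : ℕ) (j : ℕ) ∈ A) := by
      rw [hA']; exact propext (mem_image_swap _ _ _ _)
    rw [fin_swap_val, rho_eq q A r hr, rho_eq q A' r' hr'le]
    simp only [h1, h0, hpar j, hr'def]
    by_cases hu : Equiv.swap (i : ℕ) (i' : ℕ) (j : ℕ) ∈ A <;>
      by_cases hp : (j : ℕ) % 2 = 0 <;>
      by_cases hv : 0 ∈ A <;>
      by_cases hw : Equiv.swap (i : ℕ) (i' : ℕ) 0 ∈ A <;>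
      simp [hu, hp, hv, hw] <;> omega
  have key2 : ∀ j : Fin (2 * k),
      (if ((Equiv.swap i i' j : Fin (2 * k)) : ℕ) ∈ A
        then 0 else rho q A r ((Equiv.swap i i' j : Fin (2 * k)) : ℕ))
      = if (j : ℕ) ∈ A' then 0 else rho q A' r' (j : ℕ) := by
    intro j
    have h1 : ((j : ℕ) ∈ A') = (Equiv.swap (i : ℕ) (i' : ℕ) (j : ℕ) ∈ A) := by
      rw [hA']; exact propext (mem_image_swap _ _ _ _)
    rw [fin_swap_val, rho_eq q A r hr, rho_eq q A' r' hr'le]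
    simp only [h1, h0, hpar j, hr'def]
    by_cases hu : Equiv.swap (i : ℕ) (i' : ℕ) (j : ℕ) ∈ A <;>
      by_cases hp : (j : ℕ) % 2 = 0 <;>
      by_cases hv : 0 ∈ A <;>
      by_cases hw : Equiv.swap (i : ℕ) (i' : ℕ) 0 ∈ A <;>
      simp [hu, hp, hv, hw] <;> omega
  unfold fsr
  rw [map_sub, rename_monomial, rename_monomial, mapDomain_swap _ _ _ _ key,
    mapDomain_swap _ _ _ _ key2]

lemma fsr_compl (K : Type) [Field K] (q k : ℕ) (hq : 2 < q) (hk : 0 < k) (A : Finset ℕ)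
    (r : ℕ) (hr1 : 1 ≤ r) (hr2 : r ≤ q - 2) :
    fsr K q k (Finset.range (2 * k) \ A) r = - fsr K q k A r := by
  have hr : r ≤ q - 1 := by omega
  unfold fsr
  rw [neg_sub]
  have e1 : (Finsupp.equivFunOnFinite.symm fun j : Fin (2 * k) =>
      if (j : ℕ) ∈ Finset.range (2 * k) \ A then rho q (Finset.range (2 * k) \ A) r (j : ℕ) else 0)
      = Finsupp.equivFunOnFinite.symm fun j : Fin (2 * k) =>
      if (j : ℕ) ∈ A then 0 else rho q A r (j : ℕ) := by
    congr 1
    funext j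
    have hj : (j : ℕ) ∈ Finset.range (2 * k) := Finset.mem_range.mpr j.isLt
    have h0 : (0 : ℕ) ∈ Finset.range (2 * k) := Finset.mem_range.mpr (by omega)
    rw [rho_eq q _ _ hr, rho_eq q A r hr]
    simp only [Finset.mem_sdiff, hj, h0, true_and]
    by_cases hu : (j : ℕ) ∈ A <;> by_cases hp : (j : ℕ) % 2 = 0 <;> by_cases hv : 0 ∈ A <;>
      simp [hu, hp, hv] <;> omega
  have e2 : (Finsupp.equivFunOnFinite.symm fun j : Fin (2 * k) =>
      if (j : ℕ) ∈ Finset.range (2 * k) \ A then 0 else rho q (Finset.range (2 * k) \ A) r (j : ℕ))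
      = Finsupp.equivFunOnFinite.symm fun j : Fin (2 * k) =>
      if (j : ℕ) ∈ A then rho q A r (j : ℕ) else 0 := by
    congr 1
    funext j
    have hj : (j : ℕ) ∈ Finset.range (2 * k) := Finset.mem_range.mpr j.isLt
    have h0 : (0 : ℕ) ∈ Finset.range (2 * k) := Finset.mem_range.mpr (by omega)
    rw [rho_eq q _ _ hr, rho_eq q A r hr]
    simp only [Finset.mem_sdiff, hj, h0, true_and]
    by_cases hu : (j : ℕ) ∈ A <;> by_cases hp : (j : ℕ) % 2 = 0 <;> by_cases hv : 0 ∈ A <;>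
      simp [hu, hp, hv] <;> omega
  rw [e1, e2]

lemma rename_mem_ideal (K : Type) [Field K] (q k : ℕ) (hk : 2 ≤ k)
    (i i' : Fin (2 * k)) (hii' : (i' : ℕ) = (i : ℕ) + 2)
    {f : MvPolynomial (Fin (2 * k)) K} (hf : f ∈ cycleVanishingIdeal K k) :
    rename (Equiv.swap i i') f ∈ cycleVanishingIdeal K k := by
  have hn : 4 ≤ 2 * k := by omega
  have ha2 : (i : ℕ) + 2 < 2 * k := hii' ▸ i'.isLt
  set e : Equiv.Perm (Fin (2 * k)) := finRotate (2 * k) with he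
  -- numeric values
  have hvi1 : ((e i : Fin (2 * k)) : ℕ) = (i : ℕ) + 1 := by
    rw [he, coe_finRotate', Nat.mod_eq_of_lt (by omega)]
  have hvi3 : ((e i' : Fin (2 * k)) : ℕ) = ((i : ℕ) + 3) % (2 * k) := by
    rw [he, coe_finRotate', hii']
  have h3 : ((e i' : Fin (2 * k)) : ℕ) = (i : ℕ) + 3 ∨
      (((e i' : Fin (2 * k)) : ℕ) = (i : ℕ) + 3 - 2 * k ∧ 2 * k ≤ (i : ℕ) + 3) := by
    rw [hvi3]
    rcases lt_or_ge ((i : ℕ) + 3) (2 * k) with h | h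
    · exact Or.inl (Nat.mod_eq_of_lt h)
    · exact Or.inr ⟨by rw [Nat.mod_eq_sub_mod h, Nat.mod_eq_of_lt (by omega)], h⟩
  have hne : ∀ u v : Fin (2 * k), (u : ℕ) ≠ (v : ℕ) → u ≠ v :=
    fun u v h hh => h (by rw [hh])
  have d01 : i ≠ e i := hne _ _ (by omega)
  have d02 : i ≠ i' := hne _ _ (by omega)
  have d03 : i ≠ e i' := hne _ _ (by omega)
  have d12 : e i ≠ i' := hne _ _ (by omega)
  have d13 : e i ≠ e i' := hne _ _ (by omega)
  have d23 : i' ≠ e i' := hne _ _ (by omega)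
  have hei1 : e (e i) = i' := by
    apply Fin.val_injective
    rw [he, coe_finRotate']
    rw [he] at hvi1
    rw [hvi1, hii', Nat.mod_eq_of_lt (by omega)]
  -- ideal invariance
  have hmap := Ideal.mem_map_of_mem
    (rename (Equiv.swap i i') : MvPolynomial (Fin (2 * k)) K →ₐ[K] MvPolynomial (Fin (2 * k)) K) hf
  rw [cycleVanishingIdeal, Ideal.map_span] at hmap
  refine Ideal.span_mono ?_ hmap
  rintro _ ⟨g, ⟨⟨d, hd⟩, hv⟩, rfl⟩
  refine ⟨⟨d, hd.rename_isHomogeneous⟩, ?_⟩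
  intro x
  rw [eval_rename]
  set y : Fin (2 * k) → Kˣ := fun j =>
    if j = e i then x i' * x (e i') * (x i)⁻¹
    else if j = i' then x i * x (e i) * (x (e i'))⁻¹
    else x j with hy
  have key : ((fun j => ((x j * x (e j) : Kˣ) : K)) ∘ ⇑(Equiv.swap i i'))
      = fun j => ((y j * y (e j) : Kˣ) : K) := by
    funext j
    simp only [Function.comp_apply]
    by_cases hj1 : j = i
    · subst hj1
      rw [Equiv.swap_apply_left]
      simp only [hy, if_neg d01, if_neg d02, if_pos rfl]
      simp only [Units.val_mul, Units.val_inv_eq_inv_val]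
      first
      | (field_simp; ring)
      | field_simp
    by_cases hj2 : j = e i
    · subst hj2
      rw [Equiv.swap_apply_of_ne_of_ne d01.symm d12, hei1]
      simp only [hy, if_pos rfl, if_neg d12.symm, if_neg d12, if_neg d23.symm, ite_true]
      simp only [Units.val_mul, Units.val_inv_eq_inv_val]
      first
      | (field_simp; ring)
      | field_simp
    by_cases hj3 : j = i'
    · subst hj3
      rw [Equiv.swap_apply_right]
      simp only [hy, if_neg d01, if_neg d02, if_pos rfl, if_neg d12.symm, if_neg d13.symm,
        if_neg d23.symm, if_true]
      simp only [Units.val_mul, Units.val_inv_eq_inv_val]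
      first
      | (field_simp; ring)
      | field_simp
    · rw [Equiv.swap_apply_of_ne_of_ne hj1 hj3]
      have h1 : e j ≠ e i := fun h => hj1 (e.injective h)
      have h2 : e j ≠ i' := fun h => hj2 (e.injective (h.trans hei1.symm))
      simp only [hy, if_neg hj2, if_neg hj3, if_neg h1, if_neg h2]
  rw [key]
  exact hv y

/-- Let `G = C_{2k}` (`k ≥ 2`, `s = 2k`).  For `i` with `i + 2 ≤ s − 1`
(paper: `1 ≤ i ≤ s−2`, one-based), the `K`-algebra automorphism `σ_i` of `S` exchanging
`t_i` and `t_{i+2}` and fixing the other variables maps the set `F` of all binomials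
`±f_σ^r` lying in `I(X)` bijectively onto itself. -/
theorem swap_permutes_generators
    (q k : ℕ) (hq : 2 < q) (hk : 2 ≤ k) (K : Type) [Field K] [Fintype K]
    (hcard : Fintype.card K = q)
    (i i' : Fin (2 * k)) (hii' : (i' : ℕ) = (i : ℕ) + 2) :
    (fun p : MvPolynomial (Fin (2 * k)) K =>
        rename (Equiv.swap i i') p) '' fsrSet K q k = fsrSet K q k := by
  have hmem : ∀ p ∈ fsrSet K q k, rename (Equiv.swap i i') p ∈ fsrSet K q k := by
    rintro p ⟨A, r, hA, h0, hc, hr1, hr2, hI, hp⟩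
    have hA'sub : A.image ⇑(Equiv.swap (i : ℕ) (i' : ℕ)) ⊆ Finset.range (2 * k) := by
      intro m hm
      rw [Finset.mem_image] at hm
      obtain ⟨z, hz, rfl⟩ := hm
      rw [Finset.mem_range]
      rcases eq_or_ne z (i : ℕ) with rfl | h1
      · rw [Equiv.swap_apply_left]; exact i'.isLt
      rcases eq_or_ne z (i' : ℕ) with rfl | h2
      · rw [Equiv.swap_apply_right]; exact i.isLt
      · rw [Equiv.swap_apply_of_ne_of_ne h1 h2]; exact Finset.mem_range.mp (hA hz)
    have hcardA' : (A.image ⇑(Equiv.swap (i : ℕ) (i' : ℕ))).card = A.card :=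
      Finset.card_image_of_injective _ (Equiv.injective _)
    have hcards : A.card + A.card = 2 * k := by
      have h1 := Finset.card_sdiff_of_subset hA
      rw [Finset.card_range] at h1
      have h2 := Finset.card_le_card hA
      rw [Finset.card_range] at h2
      omega
    have hcA' : (A.image ⇑(Equiv.swap (i : ℕ) (i' : ℕ))).card =
        (Finset.range (2 * k) \ A.image ⇑(Equiv.swap (i : ℕ) (i' : ℕ))).card := by
      rw [Finset.card_sdiff_of_subset hA'sub, Finset.card_range]; omega
    have hren := rename_fsr K q k hq A r hr2 i i' hii'
    have hI' := rename_mem_ideal K q k hk i i' hii' hI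
    by_cases h0' : (0 : ℕ) ∈ A.image ⇑(Equiv.swap (i : ℕ) (i' : ℕ))
    · have hiff : (0 ∈ A.image ⇑(Equiv.swap (i : ℕ) (i' : ℕ)) ↔ 0 ∈ A) :=
        ⟨fun _ => h0, fun _ => h0'⟩
      rw [if_pos hiff] at hren
      refine ⟨A.image ⇑(Equiv.swap (i : ℕ) (i' : ℕ)), r, hA'sub, h0', hcA', hr1, hr2,
        by rw [← hren]; exact hI', ?_⟩
      rcases hp with rfl | rfl
      · exact Or.inl hren
      · right; rw [map_neg, hren]
    · have hiff : ¬ (0 ∈ A.image ⇑(Equiv.swap (i : ℕ) (i' : ℕ)) ↔ 0 ∈ A) :=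
        fun h => h0' (h.mpr h0)
      rw [if_neg hiff] at hren
      have hrb1 : 1 ≤ q - 1 - r := by omega
      have hrb2 : q - 1 - r ≤ q - 2 := by omega
      have hcompl := fsr_compl K q k hq (by omega) (A.image ⇑(Equiv.swap (i : ℕ) (i' : ℕ)))
        (q - 1 - r) hrb1 hrb2
      refine ⟨Finset.range (2 * k) \ A.image ⇑(Equiv.swap (i : ℕ) (i' : ℕ)), q - 1 - r,
        Finset.sdiff_subset, ?_, ?_, hrb1, hrb2, ?_, ?_⟩
      · rw [Finset.mem_sdiff]; exact ⟨Finset.mem_range.mpr (by omega), h0'⟩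
      · rw [sdiff_sdiff_eq_self hA'sub, Finset.card_sdiff_of_subset hA'sub, Finset.card_range]
        omega
      · rw [hcompl]; exact neg_mem (by rw [← hren]; exact hI')
      · rcases hp with rfl | rfl
        · right; rw [hren, hcompl, neg_neg]
        · left; rw [map_neg, hren, hcompl]
  ext p
  simp only [Set.mem_image]
  constructor
  · rintro ⟨p', hp', rfl⟩
    exact hmem p' hp'
  · intro hp
    refine ⟨rename (Equiv.swap i i') p, hmem p hp, ?_⟩
    have hcomp : (⇑(Equiv.swap i i') ∘ ⇑(Equiv.swap i i')) = id := by
      funext z; simp [Equiv.swap_apply_self]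
    rw [rename_rename, hcomp, rename_id, AlgHom.id_apply]
end
end
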